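/- On 𝔫_{1,1}, the inner product making e₁,…,e₆ orthonormal is compatible with J and the resulting Hermitian structure (J,g) is strong KT; on the other hand, for all real t, s with s ≠ 0 and t² ≠ s², no inner product on 𝔫_{t,s} compatible with J yields a strong KT structure. (Since all 𝔫_{t,s} with s ≠ 0 are isomorphic to the complex Heisenberg Lie algebra, this expresses that on the Iwasawa manifold the strong KT condition is not stable under small deformations of the complex structure.) -/

import Mathlib

/-- The Chevalley–Eilenberg differential of a `2`-form `F` on a real Lie algebra. -/
def dTwoForm {L : Type} [LieRing L] (F : L → L → ℝ) (x y z : L) : ℝ :=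
  -F ⁅x, y⁆ z + F ⁅x, z⁆ y - F ⁅y, z⁆ x

/-- The Chevalley–Eilenberg differential of a `3`-form `τ` on a real Lie algebra. -/
def dThreeForm {L : Type} [LieRing L] (τ : L → L → L → ℝ) (x y z w : L) : ℝ :=
  -τ ⁅x, y⁆ z w + τ ⁅x, z⁆ y w - τ ⁅x, w⁆ y z - τ ⁅y, z⁆ x w + τ ⁅y, w⁆ x z - τ ⁅z, w⁆ x y

/-- `(J, g)` is strong Kähler with torsion: the `3`-form `τ(x,y,z) = −(dF)(Jx,Jy,Jz)`,
where `F(x,y) = g(Jx,y)`, is closed. -/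
def IsStrongKT {L : Type} [LieRing L] [LieAlgebra ℝ L]
    (J : L →ₗ[ℝ] L) (g : L →ₗ[ℝ] L →ₗ[ℝ] ℝ) : Prop :=
  ∀ x y z w : L,
    dThreeForm (fun a b c => -(dTwoForm (fun p q => g (J p) q) (J a) (J b) (J c))) x y z w = 0

/-- The structure relations for the Lie algebra `𝔫_{t,s}` with respect to a basis `e`. -/
def IsNtsBasis (t s : ℝ) {L : Type} [LieRing L] [LieAlgebra ℝ L]
    (e : Module.Basis (Fin 6) ℝ L) : Prop :=
  ⁅e 0, e 1⁆ = (-t) • e 4 ∧ ⁅e 2, e 3⁆ = (-(2*t)) • e 4 ∧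
  ⁅e 0, e 2⁆ = (-s) • e 4 ∧ ⁅e 1, e 3⁆ = s • e 4 ∧
  ⁅e 0, e 3⁆ = (-s) • e 5 ∧ ⁅e 1, e 2⁆ = (-s) • e 5 ∧
  ⁅e 0, e 4⁆ = 0 ∧ ⁅e 0, e 5⁆ = 0 ∧ ⁅e 1, e 4⁆ = 0 ∧ ⁅e 1, e 5⁆ = 0 ∧
  ⁅e 2, e 4⁆ = 0 ∧ ⁅e 2, e 5⁆ = 0 ∧ ⁅e 3, e 4⁆ = 0 ∧ ⁅e 3, e 5⁆ = 0 ∧ ⁅e 4, e 5⁆ = 0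

/-- The defining relations for the almost complex structure `J` with respect to a basis `e`:
`Je₁ = e₂`, `Je₂ = −e₁`, `Je₃ = e₄`, `Je₄ = −e₃`, `Je₅ = e₆`, `Je₆ = −e₅`. -/
def IsJBasis {L : Type} [LieRing L] [LieAlgebra ℝ L]
    (e : Module.Basis (Fin 6) ℝ L) (J : L →ₗ[ℝ] L) : Prop :=
  J (e 0) = e 1 ∧ J (e 1) = -e 0 ∧ J (e 2) = e 3 ∧ J (e 3) = -e 2 ∧
  J (e 4) = e 5 ∧ J (e 5) = -e 4

/-! ### Auxiliary integer structure-constant data for `𝔫_{1,1}` -/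

def ntsJp : Fin 6 → Fin 6 := ![1,0,3,2,5,4]
def ntsJs : Fin 6 → ℤ := ![1,-1,1,-1,1,-1]
def ntsC4 : Fin 6 → Fin 6 → ℤ :=
  ![![0,-1,-1,0,0,0], ![1,0,0,1,0,0], ![1,0,0,-2,0,0], ![0,-1,2,0,0,0],
    ![0,0,0,0,0,0], ![0,0,0,0,0,0]]
def ntsC5 : Fin 6 → Fin 6 → ℤ :=
  ![![0,0,0,-1,0,0], ![0,0,-1,0,0,0], ![0,1,0,0,0,0], ![1,0,0,0,0,0],
    ![0,0,0,0,0,0], ![0,0,0,0,0,0]]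

/-- The value of `τ(⁅e_a, e_b⁆, e_u, e_v)` for `𝔫_{1,1}` with the orthonormal metric. -/
def ntsT (a b u v : Fin 6) : ℤ :=
  ntsJs u * ntsJs v *
    (ntsC4 a b * ntsC4 (ntsJp u) (ntsJp v) + ntsC5 a b * ntsC5 (ntsJp u) (ntsJp v))

/-- The value of `dτ(e_i, e_j, e_k, e_l)` for `𝔫_{1,1}` with the orthonormal metric. -/
def ntsF (i j k l : Fin 6) : ℤ :=
  -ntsT i j k l + ntsT i k j l - ntsT i l j k - ntsT j k i l + ntsT j l i k - ntsT k l i j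

theorem ntsF_zero : ∀ i j k l : Fin 6, ntsF i j k l = 0 := by decide

theorem ntsRowC4 : ∀ m : Fin 6, ntsC4 4 m = 0 ∧ ntsC4 5 m = 0 := by decide
theorem ntsRowC5 : ∀ m : Fin 6, ntsC5 4 m = 0 ∧ ntsC5 5 m = 0 := by decide

lemma finmk0 (h : 0 < 6) : (⟨0, h⟩ : Fin 6) = 0 := rfl
lemma finmk1 (h : 1 < 6) : (⟨1, h⟩ : Fin 6) = 1 := rfl
lemma finmk2 (h : 2 < 6) : (⟨2, h⟩ : Fin 6) = 2 := rfl
lemma finmk3 (h : 3 < 6) : (⟨3, h⟩ : Fin 6) = 3 := rfl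
lemma finmk4 (h : 4 < 6) : (⟨4, h⟩ : Fin 6) = 4 := rfl
lemma finmk5 (h : 5 < 6) : (⟨5, h⟩ : Fin 6) = 5 := rfl

lemma vec6_0 {α : Type*} (a b c d f g : α) : ![a,b,c,d,f,g] 0 = a := rfl
lemma vec6_1 {α : Type*} (a b c d f g : α) : ![a,b,c,d,f,g] 1 = b := rfl
lemma vec6_2 {α : Type*} (a b c d f g : α) : ![a,b,c,d,f,g] 2 = c := rfl
lemma vec6_3 {α : Type*} (a b c d f g : α) : ![a,b,c,d,f,g] 3 = d := rfl
lemma vec6_4 {α : Type*} (a b c d f g : α) : ![a,b,c,d,f,g] 4 = f := rfl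
lemma vec6_5 {α : Type*} (a b c d f g : α) : ![a,b,c,d,f,g] 5 = g := rfl

/-- Extension of a linear functional-type identity from a basis to the whole space. -/
lemma linext6 {L : Type} [AddCommGroup L] [Module ℝ L] (e : Module.Basis (Fin 6) ℝ L)
    (f : L → ℝ) (ha : ∀ a b, f (a + b) = f a + f b)
    (hs : ∀ (c : ℝ) (a : L), f (c • a) = c * f a)
    (h0 : ∀ i, f (e i) = 0) : ∀ x, f x = 0 := by
  intro x
  have key : (⟨⟨f, fun a b => ha a b⟩, fun c a => by simpa using hs c a⟩ : L →ₗ[ℝ] ℝ) = 0 :=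
    e.ext fun i => by simpa using h0 i
  simpa using LinearMap.congr_fun key x

set_option maxHeartbeats 1000000 in
theorem nts_strongKT_not_stable :
    (∀ (L : Type) [LieRing L] [LieAlgebra ℝ L] (e : Module.Basis (Fin 6) ℝ L),
      IsNtsBasis 1 1 e → ∀ J : L →ₗ[ℝ] L, IsJBasis e J →
        ∀ g : L →ₗ[ℝ] L →ₗ[ℝ] ℝ, (∀ x y : L, g x y = g y x) →
          (∀ i j : Fin 6, g (e i) (e j) = if i = j then 1 else 0) →
            (∀ x y : L, g (J x) (J y) = g x y) ∧ IsStrongKT J g) ∧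
    (∀ t s : ℝ, s ≠ 0 → t ^ 2 ≠ s ^ 2 →
      ∀ (L : Type) [LieRing L] [LieAlgebra ℝ L] (e : Module.Basis (Fin 6) ℝ L),
        IsNtsBasis t s e → ∀ J : L →ₗ[ℝ] L, IsJBasis e J →
          ∀ g : L →ₗ[ℝ] L →ₗ[ℝ] ℝ, (∀ x y : L, g x y = g y x) →
            (∀ x : L, x ≠ 0 → 0 < g x x) →
              (∀ x y : L, g (J x) (J y) = g x y) → ¬ IsStrongKT J g) := by
  constructor
  · -- Part 1 : 𝔫_{1,1} with the orthonormal metric is strong KT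
    intro L _ _ e hN J hJ g hsym horth
    obtain ⟨h01, h23, h02, h13, h03, h12, h04, h05, h14, h15, h24, h25, h34, h35, h45⟩ := hN
    obtain ⟨hJ0, hJ1, hJ2, hJ3, hJ4, hJ5⟩ := hJ
    -- compatibility
    have hcompat : ∀ x y : L, g (J x) (J y) = g x y := by
      have key : ∀ i j : Fin 6, g (J (e i)) (J (e j)) = g (e i) (e j) := by
        intro i j
        fin_cases i <;> fin_cases j <;>
          simp [hJ0, hJ1, hJ2, hJ3, hJ4, hJ5, horth, map_neg, LinearMap.neg_apply]
      have step1 : ∀ (i : Fin 6) (y : L), g (J (e i)) (J y) = g (e i) y := by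
        intro i y
        have := linext6 e (fun y => g (J (e i)) (J y) - g (e i) y)
          (by intro a b; simp; ring) (by intro c a; simp; ring)
          (by intro j; simp [key]) y
        linarith [this]
      intro x y
      have := linext6 e (fun x => g (J x) (J y) - g x y)
        (by intro a b; simp; ring) (by intro c a; simp; ring)
        (by intro i; simp [step1]) x
      linarith [this]
    refine ⟨hcompat, ?_⟩
    -- the bracket table
    have sk : ∀ (x y : L), ⁅x, y⁆ = -⁅y, x⁆ := fun x y => by rw [← lie_skew]
    have h10 := sk (e 1) (e 0); have h32 := sk (e 3) (e 2); have h20 := sk (e 2) (e 0)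
    have h31 := sk (e 3) (e 1); have h30 := sk (e 3) (e 0); have h21 := sk (e 2) (e 1)
    have h40 := sk (e 4) (e 0); have h50 := sk (e 5) (e 0); have h41 := sk (e 4) (e 1)
    have h51 := sk (e 5) (e 1); have h42 := sk (e 4) (e 2); have h52 := sk (e 5) (e 2)
    have h43 := sk (e 4) (e 3); have h53 := sk (e 5) (e 3); have h54 := sk (e 5) (e 4)
    have hbrak : ∀ i j : Fin 6,
        ⁅e i, e j⁆ = ((ntsC4 i j : ℤ) : ℝ) • e 4 + ((ntsC5 i j : ℤ) : ℝ) • e 5 := by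
      intro i j
      fin_cases i <;> fin_cases j <;>
        simp only [finmk0, finmk1, finmk2, finmk3, finmk4, finmk5, ntsC4, ntsC5,
          vec6_0, vec6_1, vec6_2, vec6_3, vec6_4, vec6_5] <;>
        norm_num [h01, h23, h02, h13, h03, h12, h04, h05, h14, h15, h24, h25,
          h34, h35, h45, h10, h32, h20, h31, h30, h21, h40, h50, h41, h51, h42, h52,
          h43, h53, h54]
    have hJb : ∀ i : Fin 6, J (e i) = ((ntsJs i : ℤ) : ℝ) • e (ntsJp i) := by
      intro i
      fin_cases i <;>
        simp only [finmk0, finmk1, finmk2, finmk3, finmk4, finmk5, ntsJs, ntsJp,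
          vec6_0, vec6_1, vec6_2, vec6_3, vec6_4, vec6_5] <;>
        norm_num [hJ0, hJ1, hJ2, hJ3, hJ4, hJ5]
    -- centrality of e 4 and e 5
    have hc4 : ∀ x : L, ⁅e 4, x⁆ = 0 := by
      have h : (LieAlgebra.ad ℝ L (e 4)) = (0 : L →ₗ[ℝ] L) := by
        refine e.ext fun i => ?_
        have := hbrak 4 i
        simp [LieAlgebra.ad_apply, this, (ntsRowC4 i).1, (ntsRowC5 i).1]
      intro x
      have := LinearMap.congr_fun h x
      simpa [LieAlgebra.ad_apply] using this
    have hc5 : ∀ x : L, ⁅e 5, x⁆ = 0 := by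
      have h : (LieAlgebra.ad ℝ L (e 5)) = (0 : L →ₗ[ℝ] L) := by
        refine e.ext fun i => ?_
        have := hbrak 5 i
        simp [LieAlgebra.ad_apply, this, (ntsRowC4 i).2, (ntsRowC5 i).2]
      intro x
      have := LinearMap.congr_fun h x
      simpa [LieAlgebra.ad_apply] using this
    -- τ on central first arguments
    have htau : ∀ (c d : ℝ) (y z : L),
        -(dTwoForm (fun p q => g (J p) q) (J (c • e 4 + d • e 5)) (J y) (J z))
          = c * g (J ⁅J y, J z⁆) (e 5) - d * g (J ⁅J y, J z⁆) (e 4) := by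
      intro c d y z
      simp only [dTwoForm]
      simp [map_add, map_smul, hJ4, hJ5, map_neg, add_lie, smul_lie, neg_lie, hc4, hc5,
        lie_zero, zero_lie, LinearMap.add_apply, LinearMap.smul_apply, LinearMap.neg_apply,
        smul_eq_mul]
      ring
    -- values of g (J ⁅J eₖ, J eₗ⁆) (e 5) and (e 4)
    have hG5 : ∀ k l : Fin 6, g (J ⁅J (e k), J (e l)⁆) (e 5)
        = ((ntsJs k * ntsJs l * ntsC4 (ntsJp k) (ntsJp l) : ℤ) : ℝ) := by
      intro k l
      rw [hJb k, hJb l]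
      rw [smul_lie, lie_smul, hbrak (ntsJp k) (ntsJp l)]
      simp [map_add, map_smul, hJ4, hJ5, horth, LinearMap.add_apply, LinearMap.smul_apply,
        map_neg, LinearMap.neg_apply, smul_eq_mul]
      ring
    have hG4 : ∀ k l : Fin 6, g (J ⁅J (e k), J (e l)⁆) (e 4)
        = -((ntsJs k * ntsJs l * ntsC5 (ntsJp k) (ntsJp l) : ℤ) : ℝ) := by
      intro k l
      rw [hJb k, hJb l]
      rw [smul_lie, lie_smul, hbrak (ntsJp k) (ntsJp l)]
      simp [map_add, map_smul, hJ4, hJ5, horth, LinearMap.add_apply, LinearMap.smul_apply,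
        map_neg, LinearMap.neg_apply, smul_eq_mul]
      ring
    -- dτ vanishes on basis quadruples
    have hD0 : ∀ i j k l : Fin 6,
        dThreeForm (fun a b c => -(dTwoForm (fun p q => g (J p) q) (J a) (J b) (J c)))
          (e i) (e j) (e k) (e l) = 0 := by
      intro i j k l
      have hz : ((ntsF i j k l : ℤ) : ℝ) = 0 := by rw [ntsF_zero]; norm_num
      simp only [ntsF, ntsT] at hz
      push_cast at hz
      simp only [dThreeForm]
      rw [hbrak i j, hbrak i k, hbrak i l, hbrak j k, hbrak j l, hbrak k l]
      rw [htau, htau, htau, htau, htau, htau]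
      rw [hG5 k l, hG4 k l, hG5 j l, hG4 j l, hG5 j k, hG4 j k,
        hG5 i l, hG4 i l, hG5 i k, hG4 i k, hG5 i j, hG4 i j]
      push_cast
      linear_combination hz
    -- linearity of dτ in each slot
    intro x y z w
    set D : L → L → L → L → ℝ := fun x y z w =>
      dThreeForm (fun a b c => -(dTwoForm (fun p q => g (J p) q) (J a) (J b) (J c))) x y z w
      with hD
    show D x y z w = 0
    have Dadd1 : ∀ a b y z w, D (a + b) y z w = D a y z w + D b y z w := by
      intro a b y z w
      simp only [hD, dThreeForm, dTwoForm, add_lie, lie_add, map_add, LinearMap.add_apply]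
      ring
    have Dsmul1 : ∀ (c : ℝ) a y z w, D (c • a) y z w = c * D a y z w := by
      intro c a y z w
      simp only [hD, dThreeForm, dTwoForm, smul_lie, lie_smul, map_smul,
        LinearMap.smul_apply, smul_eq_mul]
      ring
    have Dadd2 : ∀ x a b z w, D x (a + b) z w = D x a z w + D x b z w := by
      intro x a b z w
      simp only [hD, dThreeForm, dTwoForm, add_lie, lie_add, map_add, LinearMap.add_apply]
      ring
    have Dsmul2 : ∀ x (c : ℝ) a z w, D x (c • a) z w = c * D x a z w := by
      intro x c a z w
      simp only [hD, dThreeForm, dTwoForm, smul_lie, lie_smul, map_smul,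
        LinearMap.smul_apply, smul_eq_mul]
      ring
    have Dadd3 : ∀ x y a b w, D x y (a + b) w = D x y a w + D x y b w := by
      intro x y a b w
      simp only [hD, dThreeForm, dTwoForm, add_lie, lie_add, map_add, LinearMap.add_apply]
      ring
    have Dsmul3 : ∀ x y (c : ℝ) a w, D x y (c • a) w = c * D x y a w := by
      intro x y c a w
      simp only [hD, dThreeForm, dTwoForm, smul_lie, lie_smul, map_smul,
        LinearMap.smul_apply, smul_eq_mul]
      ring
    have Dadd4 : ∀ x y z a b, D x y z (a + b) = D x y z a + D x y z b := by
      intro x y z a b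
      simp only [hD, dThreeForm, dTwoForm, add_lie, lie_add, map_add, LinearMap.add_apply]
      ring
    have Dsmul4 : ∀ x y z (c : ℝ) a, D x y z (c • a) = c * D x y z a := by
      intro x y z c a
      simp only [hD, dThreeForm, dTwoForm, smul_lie, lie_smul, map_smul,
        LinearMap.smul_apply, smul_eq_mul]
      ring
    have step4 : ∀ (i j k : Fin 6) (w : L), D (e i) (e j) (e k) w = 0 := fun i j k w =>
      linext6 e (fun w => D (e i) (e j) (e k) w) (fun a b => Dadd4 _ _ _ a b)
        (fun c a => Dsmul4 _ _ _ c a) (fun l => hD0 i j k l) w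
    have step3 : ∀ (i j : Fin 6) (z w : L), D (e i) (e j) z w = 0 := fun i j z w =>
      linext6 e (fun z => D (e i) (e j) z w) (fun a b => Dadd3 _ _ a b w)
        (fun c a => Dsmul3 _ _ c a w) (fun k => step4 i j k w) z
    have step2 : ∀ (i : Fin 6) (y z w : L), D (e i) y z w = 0 := fun i y z w =>
      linext6 e (fun y => D (e i) y z w) (fun a b => Dadd2 _ a b z w)
        (fun c a => Dsmul2 _ c a z w) (fun j => step3 i j z w) y
    exact linext6 e (fun x => D x y z w) (fun a b => Dadd1 a b y z w)
      (fun c a => Dsmul1 c a y z w) (fun i => step2 i y z w) x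
  · -- Part 2 : non-stability
    intro t s hs hts L _ _ e hN J hJ g hsym hpos hcompat hSKT
    obtain ⟨h01, h23, h02, h13, h03, h12, h04, h05, h14, h15, h24, h25, h34, h35, h45⟩ := hN
    obtain ⟨hJ0, hJ1, hJ2, hJ3, hJ4, hJ5⟩ := hJ
    have sk : ∀ (x y : L), ⁅x, y⁆ = -⁅y, x⁆ := fun x y => by rw [← lie_skew]
    have h10 := sk (e 1) (e 0); have h32 := sk (e 3) (e 2); have h20 := sk (e 2) (e 0)
    have h31 := sk (e 3) (e 1); have h30 := sk (e 3) (e 0); have h21 := sk (e 2) (e 1)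
    have h40 := sk (e 4) (e 0); have h50 := sk (e 5) (e 0); have h41 := sk (e 4) (e 1)
    have h51 := sk (e 5) (e 1); have h42 := sk (e 4) (e 2); have h52 := sk (e 5) (e 2)
    have h43 := sk (e 4) (e 3); have h53 := sk (e 5) (e 3); have h54 := sk (e 5) (e 4)
    have key := hSKT (e 0) (e 1) (e 2) (e 3)
    simp only [dThreeForm, dTwoForm] at key
    rw [h01, h02, h03, h12, h13, h23] at key
    simp [map_smul, map_neg, hJ0, hJ1, hJ2, hJ3, hJ4, hJ5, smul_lie, lie_smul, neg_lie,
      lie_neg, h10, h32, h20, h31, h30, h21, h40, h50, h41, h51, h42, h52, h43, h53, h54,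
      h01, h23, h02, h13, h03, h12, h04, h05, h14, h15, h24, h25, h34, h35, h45,
      LinearMap.smul_apply, LinearMap.neg_apply, smul_eq_mul] at key
    have h55 : g (e 5) (e 5) = g (e 4) (e 4) := by
      have := hcompat (e 4) (e 4)
      rw [hJ4] at this
      exact this
    have hpos4 : 0 < g (e 4) (e 4) := hpos _ (e.ne_zero 4)
    rw [h55] at key
    have h2 : g (e 4) (e 4) * (s ^ 2 - t ^ 2) = 0 := by linear_combination key / 4
    rcases mul_eq_zero.mp h2 with h | h
    · exact absurd h (ne_of_gt hpos4)
    · exact hts (show t ^ 2 = s ^ 2 by linarith)
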